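/- Let T be a tableau of row-convex shape whose rows strictly increase and whose columns contain no repeated letters (negative/commutative case). Then the lexicographically smallest monomial of the product of row minors [T] = ∏_i det( (x_{T(i,c), c'})_{c,c' ∈ columns of row i} ) is the product ∏ over cells (i,c) of x_{T(i,c), c}; that is, the diagonal monomial of each row determinant multiplies to the initial monomial of [T]. -/

import Mathlib

open scoped BigOperators

/-- A cell `(row, column)` of a diagram. -/
abbrev Cell := ℕ × ℕ

/-- A shape is row-convex if its rows have no gaps. -/
def RowConvex (D : Finset Cell) : Prop :=
  ∀ r i j k : ℕ, (r, i) ∈ D → (r, k) ∈ D → i ≤ j → j ≤ k → (r, j) ∈ D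

/-- Rows strictly increase left to right (negative-letter convention). -/
def RowStandard (D : Finset Cell) (T : Cell → ℕ) : Prop :=
  ∀ r i j : ℕ, (r, i) ∈ D → (r, j) ∈ D → i < j → T (r, i) < T (r, j)

/-- A straight tableau (negative-letter case). -/
def Straight (D : Finset Cell) (T : Cell → ℕ) : Prop :=
  RowStandard D T ∧
    ∀ i j k : ℕ, (i, k) ∈ D → (j, k) ∈ D → i < j → T (j, k) < T (i, k) →
      1 ≤ k ∧ (i, k - 1) ∈ D ∧ T (j, k) < T (i, k - 1)

/-- Sorted list of column indices of the cells of `D` in row `r`. -/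
def rowColsList (D : Finset Cell) (r : ℕ) : List ℕ :=
  ((D.filter (fun c => c.1 = r)).val.map Prod.snd).sort (· ≤ ·)

/-- The bracket (determinant of the minor of the generic matrix `(x_{l,p})`)
corresponding to row `r` of the tableau `T`. -/
noncomputable def rowBracket (D : Finset Cell) (T : Cell → ℕ) (r : ℕ) :
    MvPolynomial Cell ℤ :=
  Matrix.det (Matrix.of fun s t : Fin (rowColsList D r).length =>
    MvPolynomial.X (T (r, (rowColsList D r).get s), (rowColsList D r).get t))

/-- `[T]`: the product over the rows of `D` of the row brackets. -/
noncomputable def bracket (D : Finset Cell) (T : Cell → ℕ) : MvPolynomial Cell ℤ :=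
  ∏ r ∈ D.image Prod.fst, rowBracket D T r

/-- Multiset of entries of `T` in column `k` of `D`. -/
def colEntries (D : Finset Cell) (T : Cell → ℕ) (k : ℕ) : Multiset ℕ :=
  (D.filter (fun c => c.2 = k)).val.map T

/-- The modified column word: entries of each column in weakly decreasing
order, columns read left to right. -/
def modColWord (D : Finset Cell) (T : Cell → ℕ) : List ℕ :=
  (List.range (D.sup Prod.snd + 1)).flatMap fun k =>
    ((colEntries D T k).sort (· ≤ ·)).reverse

/-- The column word: entries read bottom to top within each column, columns
left to right. -/
def colWord (D : Finset Cell) (T : Cell → ℕ) : List ℕ :=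
  (List.range (D.sup Prod.snd + 1)).flatMap fun k =>
    (List.range (D.sup Prod.fst + 1)).reverse.filterMap fun i =>
      if (i, k) ∈ D then some (T (i, k)) else none

/-- Strict lexicographic order on words. -/
def lexLt (u v : List ℕ) : Prop := List.Lex (· < ·) u v

/-- Weak lexicographic order on words. -/
def lexLe (u v : List ℕ) : Prop := u = v ∨ List.Lex (· < ·) u v

/-- `varGt v w`: the variable `x_v` is greater than `x_w` in the default
diagonal order: strictly earlier column, or same column and strictly larger
row index (letter). -/
def varGt (v w : Cell) : Prop := v.2 < w.2 ∨ (v.2 = w.2 ∧ w.1 < v.1)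

/-- The default diagonal term order on monomials: `monLt M N` iff the greatest
variable occurring to different powers in `M` and `N` divides `N` to a higher
power. -/
def monLt (M N : Cell →₀ ℕ) : Prop :=
  ∃ v : Cell, M v < N v ∧ ∀ w : Cell, varGt w v → M w = N w

/-- The diagonal monomial of a tableau: the product over the cells `(i, c)` of
`D` of the variables `x_{T(i,c), c}`. -/
noncomputable def diagMon (D : Finset Cell) (T : Cell → ℕ) : Cell →₀ ℕ :=
  ∑ c ∈ D, Finsupp.single (T c, c.2) 1

/-- `m` is the initial (smallest) monomial of `p` in the default diagonal term
order. -/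
def IsInitMon (p : MvPolynomial Cell ℤ) (m : Cell →₀ ℕ) : Prop :=
  m ∈ p.support ∧ ∀ m' ∈ p.support, m' = m ∨ monLt m m'

/-- If `T` is a tableau of row-convex shape whose rows strictly increase and
whose columns contain no repeated letters, then the initial (lexicographically
smallest) monomial of `[T]` in the default diagonal term order is the diagonal
monomial `∏_{(i,c) ∈ D} x_{T(i,c), c}`. -/
-- Auxiliary lemmas
lemma varGt_trans {u v w : Cell} : varGt u v → varGt v w → varGt u w := by
  unfold varGt; omega

lemma varGt_total {v w : Cell} (h : v ≠ w) : varGt v w ∨ varGt w v := by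
  rw [Ne, Prod.ext_iff] at h
  unfold varGt
  omega

lemma monLt_irrefl (M : Cell →₀ ℕ) : ¬ monLt M M := fun ⟨_, h, _⟩ => lt_irrefl _ h

lemma monLt_trans {M N P : Cell →₀ ℕ} (h1 : monLt M N) (h2 : monLt N P) : monLt M P := by
  obtain ⟨v, hv, hv'⟩ := h1
  obtain ⟨u, hu, hu'⟩ := h2
  rcases eq_or_ne v u with rfl | hne
  · exact ⟨v, hv.trans hu, fun w hw => (hv' w hw).trans (hu' w hw)⟩
  · rcases varGt_total hne with h | h
    · exact ⟨v, (hu' v h) ▸ hv, fun w hw => (hv' w hw).trans (hu' w (varGt_trans hw h))⟩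
    · exact ⟨u, (hv' u h) ▸ hu, fun w hw => (hv' w (varGt_trans hw h)).trans (hu' w hw)⟩

lemma monLt_add_right (P : Cell →₀ ℕ) {M N : Cell →₀ ℕ} (h : monLt M N) :
    monLt (M + P) (N + P) := by
  obtain ⟨v, hv, hv'⟩ := h
  refine ⟨v, ?_, fun w hw => ?_⟩
  · simp only [Finsupp.add_apply]; omega
  · simp only [Finsupp.add_apply, hv' w hw]

lemma monLt_add_left (P : Cell →₀ ℕ) {M N : Cell →₀ ℕ} (h : monLt M N) :
    monLt (P + M) (P + N) := by
  rw [add_comm P M, add_comm P N]; exact monLt_add_right P h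

set_option maxHeartbeats 1000000 in
lemma isInitMon_mul {p q : MvPolynomial Cell ℤ} {mp mq : Cell →₀ ℕ}
    (hp : IsInitMon p mp) (hq : IsInitMon q mq) : IsInitMon (p * q) (mp + mq) := by
  classical
  obtain ⟨hp1, hp2⟩ := hp; obtain ⟨hq1, hq2⟩ := hq
  have hlt : ∀ m1 ∈ p.support, ∀ m2 ∈ q.support,
      (m1 = mp ∧ m2 = mq) ∨ monLt (mp + mq) (m1 + m2) := by
    intro m1 h1 m2 h2
    rcases hp2 m1 h1 with h1e | hl1 <;> rcases hq2 m2 h2 with h2e | hl2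
    · exact Or.inl ⟨h1e, h2e⟩
    · right; rw [h1e]; exact monLt_add_left mp hl2
    · right; rw [h2e]; exact monLt_add_right mq hl1
    · exact Or.inr (monLt_trans (monLt_add_right mq hl1) (monLt_add_left m1 hl2))
  constructor
  · rw [MvPolynomial.mem_support_iff, MvPolynomial.coeff_mul]
    have heq : ∑ x ∈ Finset.HasAntidiagonal.antidiagonal (mp + mq),
        MvPolynomial.coeff x.1 p * MvPolynomial.coeff x.2 q
        = MvPolynomial.coeff mp p * MvPolynomial.coeff mq q := by
      refine Finset.sum_eq_single_of_mem
        (f := fun x => MvPolynomial.coeff x.1 p * MvPolynomial.coeff x.2 q)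
        (mp, mq) (Finset.HasAntidiagonal.mem_antidiagonal.mpr rfl) ?_
      rintro ⟨x, y⟩ hxy hne
      by_cases hx : MvPolynomial.coeff x p = 0
      · simp [hx]
      by_cases hy : MvPolynomial.coeff y q = 0
      · simp [hy]
      exfalso
      rcases hlt x (MvPolynomial.mem_support_iff.mpr hx) y
          (MvPolynomial.mem_support_iff.mpr hy) with ⟨hxe, hye⟩ | hmon
      · exact hne (by rw [hxe, hye])
      · have hxy' : x + y = mp + mq := Finset.HasAntidiagonal.mem_antidiagonal.mp hxy
        rw [hxy'] at hmon; exact monLt_irrefl _ hmon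
    rw [heq]
    exact mul_ne_zero (MvPolynomial.mem_support_iff.mp hp1)
      (MvPolynomial.mem_support_iff.mp hq1)
  · intro m' hm'
    rw [MvPolynomial.mem_support_iff, MvPolynomial.coeff_mul] at hm'
    obtain ⟨⟨x, y⟩, hxy, hne⟩ := Finset.exists_ne_zero_of_sum_ne_zero hm'
    have hx : x ∈ p.support := MvPolynomial.mem_support_iff.mpr (left_ne_zero_of_mul hne)
    have hy : y ∈ q.support := MvPolynomial.mem_support_iff.mpr (right_ne_zero_of_mul hne)
    have hsum : x + y = m' := Finset.HasAntidiagonal.mem_antidiagonal.mp hxy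
    rcases hlt x hx y hy with ⟨rfl, rfl⟩ | hmon
    · exact Or.inl hsum.symm
    · rw [hsum] at hmon; exact Or.inr hmon

lemma isInitMon_one : IsInitMon 1 0 := by
  constructor
  · simp [MvPolynomial.mem_support_iff]
  · intro m' hm'
    left
    by_contra hne
    rw [MvPolynomial.mem_support_iff, MvPolynomial.coeff_one, if_neg (Ne.symm hne)] at hm'
    exact hm' rfl

lemma isInitMon_prod {ι : Type*} (s : Finset ι) (f : ι → MvPolynomial Cell ℤ)
    (m : ι → (Cell →₀ ℕ)) (h : ∀ r ∈ s, IsInitMon (f r) (m r)) :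
    IsInitMon (∏ r ∈ s, f r) (∑ r ∈ s, m r) := by
  induction s using Finset.cons_induction with
  | empty => simpa using isInitMon_one
  | cons a s ha ih =>
    rw [Finset.prod_cons, Finset.sum_cons]
    exact isInitMon_mul (h a (Finset.mem_cons_self a s))
      (ih fun r hr => h r (Finset.mem_cons.mpr (Or.inr hr)))

open MvPolynomial in
lemma prod_X_eq_monomial {ι : Type*} (s : Finset ι) (v : ι → Cell) :
    (∏ i ∈ s, (X (v i) : MvPolynomial Cell ℤ)) =
      monomial (∑ i ∈ s, Finsupp.single (v i) 1) 1 := by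
  induction s using Finset.cons_induction with
  | empty => simp
  | cons a s ha ih =>
    rw [Finset.prod_cons, Finset.sum_cons, ih, X, monomial_mul, one_mul]

noncomputable def permMon {k : ℕ} (a b : Fin k → ℕ) (σ : Equiv.Perm (Fin k)) : Cell →₀ ℕ :=
  ∑ i, Finsupp.single (a (σ i), b i) 1

lemma permMon_apply {k : ℕ} (a b : Fin k → ℕ) (σ : Equiv.Perm (Fin k)) (w : Cell) :
    permMon a b σ w = ∑ i, (if ((a (σ i), b i) : Cell) = w then 1 else 0) := by
  classical
  rw [permMon, Finsupp.finset_sum_apply]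
  exact Finset.sum_congr rfl fun i _ => Finsupp.single_apply

lemma permMon_inj {k : ℕ} {a b : Fin k → ℕ} (ha : Function.Injective a)
    (hb : Function.Injective b) {σ τ : Equiv.Perm (Fin k)}
    (h : permMon a b σ = permMon a b τ) : σ = τ := by
  classical
  apply Equiv.ext
  intro i
  have heq : permMon a b σ (a (σ i), b i) = permMon a b τ (a (σ i), b i) := by rw [h]
  rw [permMon_apply, permMon_apply] at heq
  have hL : (∑ j, (if ((a (σ j), b j) : Cell) = (a (σ i), b i) then 1 else 0)) = 1 := by
    rw [Finset.sum_eq_single_of_mem i (Finset.mem_univ i)]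
    · simp
    · intro j _ hj
      rw [if_neg]
      intro hc
      exact hj (hb (congrArg Prod.snd hc))
  rw [hL] at heq
  obtain ⟨j, _, hj⟩ := Finset.exists_ne_zero_of_sum_ne_zero
    (by rw [← heq]; norm_num :
      (∑ j, (if ((a (τ j), b j) : Cell) = (a (σ i), b i) then 1 else 0)) ≠ 0)
  rw [ne_eq, ite_eq_right_iff, not_forall] at hj
  obtain ⟨hc, -⟩ := hj
  have hcb : b j = b i := congrArg Prod.snd hc
  have hji : j = i := hb hcb
  subst hji
  have hca : a (τ j) = a (σ j) := congrArg Prod.fst hc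
  exact (ha hca).symm

lemma permMon_lt {k : ℕ} {a b : Fin k → ℕ} (ha : StrictMono a) (hb : StrictMono b)
    {σ : Equiv.Perm (Fin k)} (hσ : σ ≠ 1) : monLt (permMon a b 1) (permMon a b σ) := by
  classical
  have hne : (Finset.univ.filter fun i : Fin k => σ i ≠ i).Nonempty := by
    by_contra hc
    rw [Finset.not_nonempty_iff_eq_empty] at hc
    apply hσ
    apply Equiv.ext
    intro i
    by_contra hi
    have : i ∈ Finset.univ.filter fun i : Fin k => σ i ≠ i :=
      Finset.mem_filter.mpr ⟨Finset.mem_univ _, hi⟩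
    rw [hc] at this
    exact absurd this (Finset.notMem_empty i)
  obtain ⟨t, ht, htmin⟩ := Finset.exists_min_image _ id hne
  have htne : σ t ≠ t := (Finset.mem_filter.mp ht).2
  have hfix : ∀ i, i < t → σ i = i := by
    intro i hi
    by_contra hc
    exact absurd (htmin i (Finset.mem_filter.mpr ⟨Finset.mem_univ _, hc⟩)) (not_le.mpr hi)
  have htlt : t < σ t := by
    rcases lt_trichotomy t (σ t) with h | h | h
    · exact h
    · exact absurd h.symm htne
    · exact absurd (σ.injective (hfix (σ t) h)) htne
  refine ⟨(a (σ t), b t), ?_, ?_⟩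
  · rw [permMon_apply, permMon_apply]
    have hL : (∑ i, (if ((a ((1 : Equiv.Perm (Fin k)) i), b i) : Cell) = (a (σ t), b t)
        then 1 else 0)) = 0 := by
      refine Finset.sum_eq_zero fun i _ => ?_
      rw [if_neg]
      intro hc
      have hcb : b i = b t := congrArg Prod.snd hc
      have hib : i = t := hb.injective hcb
      subst hib
      have hca : a ((1 : Equiv.Perm (Fin k)) i) = a (σ i) := congrArg Prod.fst hc
      exact htne (ha.injective hca).symm
    rw [hL]
    have h1 : (if ((a (σ t), b t) : Cell) = (a (σ t), b t) then 1 else 0) ≤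
        ∑ i, (if ((a (σ i), b i) : Cell) = (a (σ t), b t) then 1 else 0) :=
      Finset.single_le_sum (f := fun i => if ((a (σ i), b i) : Cell) = (a (σ t), b t)
        then 1 else 0) (fun i _ => Nat.zero_le _) (Finset.mem_univ t)
    rw [if_pos rfl] at h1
    omega
  · intro w hw
    rw [permMon_apply, permMon_apply]
    refine Finset.sum_congr rfl fun i _ => ?_
    by_cases hbi : b i = w.2
    · rcases hw with hcol | ⟨hcol, hrow⟩
      · have hit : i < t := hb.lt_iff_lt.mp (by omega)
        rw [hfix i hit, Equiv.Perm.one_apply]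
      · have hit : i = t := hb.injective (by omega)
        subst hit
        rw [if_neg, if_neg]
        · intro hc
          have h1 : a (σ i) = w.1 := congrArg Prod.fst hc
          omega
        · intro hc
          have h1 : a ((1 : Equiv.Perm (Fin k)) i) = w.1 := congrArg Prod.fst hc
          have h2 : a ((1 : Equiv.Perm (Fin k)) i) = a i := rfl
          have h3 := ha htlt
          omega
    · rw [if_neg, if_neg] <;> exact fun hc => hbi (congrArg Prod.snd hc)

lemma isInitMon_det {k : ℕ} {a b : Fin k → ℕ} (ha : StrictMono a) (hb : StrictMono b) :
    IsInitMon
      (Matrix.det (Matrix.of fun s t : Fin k => (MvPolynomial.X (a s, b t) : MvPolynomial Cell ℤ)))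
      (permMon a b 1) := by
  classical
  have hdet : (Matrix.of fun s t : Fin k =>
        (MvPolynomial.X (a s, b t) : MvPolynomial Cell ℤ)).det
      = ∑ σ : Equiv.Perm (Fin k),
          MvPolynomial.monomial (permMon a b σ) ((Equiv.Perm.sign σ : ℤ)) := by
    rw [Matrix.det_apply']
    refine Finset.sum_congr rfl fun σ _ => ?_
    have hprod : (∏ i, (Matrix.of fun s t : Fin k =>
        (MvPolynomial.X (a s, b t) : MvPolynomial Cell ℤ)) (σ i) i)
        = MvPolynomial.monomial (permMon a b σ) 1 := by
      rw [permMon]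
      exact prod_X_eq_monomial Finset.univ fun i => ((a (σ i), b i) : Cell)
    rw [hprod, ← eq_intCast (MvPolynomial.C (σ := Cell) (R := ℤ)) ((Equiv.Perm.sign σ : ℤ)),
      MvPolynomial.C_mul_monomial, mul_one]
  have hcoeff : ∀ m : Cell →₀ ℕ,
      MvPolynomial.coeff m (Matrix.of fun s t : Fin k =>
        (MvPolynomial.X (a s, b t) : MvPolynomial Cell ℤ)).det
      = ∑ σ : Equiv.Perm (Fin k),
          if permMon a b σ = m then ((Equiv.Perm.sign σ : ℤ)) else 0 := by
    intro m
    rw [hdet, MvPolynomial.coeff_sum]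
    exact Finset.sum_congr rfl fun σ _ => MvPolynomial.coeff_monomial m _ _
  constructor
  · rw [MvPolynomial.mem_support_iff, hcoeff]
    have hone : (∑ σ : Equiv.Perm (Fin k),
        if permMon a b σ = permMon a b 1 then ((Equiv.Perm.sign σ : ℤ)) else 0) = 1 := by
      rw [Finset.sum_eq_single_of_mem (1 : Equiv.Perm (Fin k)) (Finset.mem_univ _)]
      · simp
      · intro σ _ hσ
        rw [if_neg fun hc => hσ (permMon_inj ha.injective hb.injective hc)]
    rw [hone]
    exact one_ne_zero
  · intro m' hm'
    rw [MvPolynomial.mem_support_iff, hcoeff] at hm'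
    obtain ⟨σ, -, hσ⟩ := Finset.exists_ne_zero_of_sum_ne_zero hm'
    have hpm : permMon a b σ = m' := by
      by_contra hc
      rw [if_neg hc] at hσ
      exact hσ rfl
    subst hpm
    rcases eq_or_ne σ 1 with rfl | hσ1
    · exact Or.inl rfl
    · exact Or.inr (permMon_lt ha hb hσ1)

lemma rowCols_mem {D : Finset Cell} {r c : ℕ} (h : c ∈ rowColsList D r) : (r, c) ∈ D := by
  rw [rowColsList, Multiset.mem_sort, Multiset.mem_map] at h
  obtain ⟨⟨p1, p2⟩, hp, hpc⟩ := h
  rw [Finset.mem_val, Finset.mem_filter] at hp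
  cases hpc
  cases hp.2
  exact hp.1

lemma rowCols_sorted (D : Finset Cell) (r : ℕ) : List.Pairwise (· < ·) (rowColsList D r) := by
  have hs : List.Pairwise (· ≤ ·) (rowColsList D r) := Multiset.pairwise_sort _ _
  have hnd : (rowColsList D r).Nodup := by
    rw [rowColsList, ← Multiset.coe_nodup, Multiset.sort_eq]
    refine Multiset.Nodup.map_on ?_ (D.filter fun c => c.1 = r).nodup
    intro x hx y hy hxy
    rw [Finset.mem_val, Finset.mem_filter] at hx hy
    exact Prod.ext (hx.2.trans hy.2.symm) hxy
  exact (hs.sortedLE.sortedLT_of_nodup hnd).pairwise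

lemma isInitMon_rowBracket (D : Finset Cell) (T : Cell → ℕ) (hrow : RowStandard D T) (r : ℕ) :
    IsInitMon (rowBracket D T r)
      (∑ s : Fin (rowColsList D r).length,
        Finsupp.single ((T (r, (rowColsList D r).get s), (rowColsList D r).get s) : Cell) 1) := by
  have hb : StrictMono (rowColsList D r).get := (rowCols_sorted D r).sortedLT.strictMono_get
  have ha : StrictMono fun s => T (r, (rowColsList D r).get s) := by
    intro s s' hss
    exact hrow r _ _ (rowCols_mem (List.get_mem _ _)) (rowCols_mem (List.get_mem _ _)) (hb hss)
  exact isInitMon_det ha hb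

lemma diagMon_eq (D : Finset Cell) (T : Cell → ℕ) :
    diagMon D T = ∑ r ∈ D.image Prod.fst, ∑ s : Fin (rowColsList D r).length,
      Finsupp.single ((T (r, (rowColsList D r).get s), (rowColsList D r).get s) : Cell) 1 := by
  classical
  rw [diagMon, ← Finset.sum_fiberwise_of_maps_to
    (fun c hc => Finset.mem_image_of_mem Prod.fst hc)
    (fun c : Cell => Finsupp.single ((T c, c.2) : Cell) 1)]
  refine Finset.sum_congr rfl fun r hr => ?_
  have hinner : (∑ s : Fin (rowColsList D r).length,
      Finsupp.single ((T (r, (rowColsList D r).get s), (rowColsList D r).get s) : Cell) 1)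
      = ((rowColsList D r).map fun c =>
          Finsupp.single ((T (r, c), c) : Cell) (1 : ℕ)).sum := by
    rw [← Fin.sum_univ_fun_getElem (rowColsList D r)
      (fun c => Finsupp.single ((T (r, c), c) : Cell) (1 : ℕ))]
    rfl
  have hlist : ((rowColsList D r).map fun c =>
        Finsupp.single ((T (r, c), c) : Cell) (1 : ℕ)).sum
      = (((D.filter fun c : Cell => c.1 = r)).val.map fun i =>
          Finsupp.single ((T i, i.2) : Cell) (1 : ℕ)).sum := by
    rw [← Multiset.sum_coe, ← Multiset.map_coe, rowColsList, Multiset.sort_eq,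
      Multiset.map_map]
    congr 1
    refine Multiset.map_congr rfl fun x hx => ?_
    rw [Finset.mem_val, Finset.mem_filter] at hx
    simp only [Function.comp_apply]
    rw [show ((r : ℕ), x.2) = x from Prod.ext hx.2.symm rfl]
  rw [hinner, hlist, Finset.sum_eq_multiset_sum]


theorem initial_monomial_is_diagonal
    (D : Finset Cell) (hD : RowConvex D) (T : Cell → ℕ)
    (hrow : RowStandard D T)
    (hcol : ∀ i j k : ℕ, (i, k) ∈ D → (j, k) ∈ D → i ≠ j → T (i, k) ≠ T (j, k)) :
    IsInitMon (bracket D T) (diagMon D T) := by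
  rw [bracket, diagMon_eq]
  exact isInitMon_prod _ _ _ (fun r _ => isInitMon_rowBracket D T hrow r)
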